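/- Under the hypotheses of the safe partition lemma (the backward arcs F of D[A_B] can be certified by pairwise arc-disjoint certificates using only arcs of A_B), there exists a minimum-size feedback arc set of D containing all arcs of F. -/

import Mathlib

/-- A tournament: irreflexive, and exactly one arc between every pair of distinct vertices. -/
def IsTournament {V : Type*} (r : V → V → Prop) : Prop :=
  (∀ v, ¬ r v v) ∧ ∀ u v : V, u ≠ v → (r u v ↔ ¬ r v u)

/-- A digraph (given by its arc relation) is acyclic: no directed cycle. -/
def Acyclic {V : Type*} (r : V → V → Prop) : Prop :=
  ∀ v, ¬ Relation.TransGen r v v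

/-- The minimum size of a feedback arc set of the digraph given by relation `r`. -/
noncomputable def fas {V : Type*} (r : V → V → Prop) : ℕ :=
  sInf {n : ℕ | ∃ F : Finset (V × V), F.card = n ∧
    Acyclic (fun a b => r a b ∧ (a, b) ∉ F)}

/-- Under the hypotheses of the safe partition lemma, there is a minimum-size feedback
arc set of `D` containing all backward arcs of `D[A_B]`. -/
theorem stmt7 (n : ℕ) (r : Fin n → Fin n → Prop) (part : Fin n → ℕ)
    (hmono : Monotone part)
    (C : Fin n × Fin n → Set (Fin n × Fin n))
    (hsub : ∀ f : Fin n × Fin n, r f.1 f.2 → part f.1 ≠ part f.2 → f.2 < f.1 →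
      C f ⊆ {e : Fin n × Fin n |
        r e.1 e.2 ∧ part e.1 ≠ part e.2 ∧ e.1 < e.2 ∧ f.2 ≤ e.1 ∧ e.2 ≤ f.1})
    (hpath : ∀ f : Fin n × Fin n, r f.1 f.2 → part f.1 ≠ part f.2 → f.2 < f.1 →
      Relation.ReflTransGen (fun x y => (x, y) ∈ C f) f.2 f.1)
    (hdisj : ∀ f g : Fin n × Fin n, r f.1 f.2 → part f.1 ≠ part f.2 → f.2 < f.1 →
      r g.1 g.2 → part g.1 ≠ part g.2 → g.2 < g.1 → f ≠ g → Disjoint (C f) (C g)) :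
    ∃ F : Finset (Fin n × Fin n), F.card = fas r ∧
      Acyclic (fun a b => r a b ∧ (a, b) ∉ F) ∧
      ∀ f : Fin n × Fin n, r f.1 f.2 → part f.1 ≠ part f.2 → f.2 < f.1 → f ∈ F := by
  classical
  -- the set of backward arcs of D[A_B]
  set B : Finset (Fin n × Fin n) :=
    Finset.univ.filter (fun f => r f.1 f.2 ∧ part f.1 ≠ part f.2 ∧ f.2 < f.1) with hBdef
  have hBmem : ∀ f : Fin n × Fin n,
      f ∈ B ↔ r f.1 f.2 ∧ part f.1 ≠ part f.2 ∧ f.2 < f.1 := by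
    intro f; simp [hBdef]
  -- a minimum feedback arc set F₀ exists
  have hne : {m : ℕ | ∃ F : Finset (Fin n × Fin n), F.card = m ∧
      Acyclic (fun a b => r a b ∧ (a, b) ∉ F)}.Nonempty := by
    refine ⟨(Finset.univ : Finset (Fin n × Fin n)).card, Finset.univ, rfl, ?_⟩
    intro v hv
    cases hv with
    | single h => exact h.2 (Finset.mem_univ _)
    | tail _ h => exact h.2 (Finset.mem_univ _)
  obtain ⟨F₀, hF₀card, hF₀acyc⟩ := Nat.sInf_mem hne
  set S : Finset (Fin n × Fin n) := B \ F₀ with hSdef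
  -- each backward arc not in F₀ has a certificate arc in F₀
  have hex : ∀ f ∈ S, ∃ e, e ∈ C f ∧ e ∈ F₀ := by
    intro f hf
    rw [hSdef, Finset.mem_sdiff] at hf
    obtain ⟨hfB, hfF₀⟩ := hf
    obtain ⟨hr, hp, hlt⟩ := (hBmem f).mp hfB
    by_contra hcon
    push_neg at hcon
    have hpath' : Relation.ReflTransGen (fun a b => r a b ∧ (a, b) ∉ F₀) f.2 f.1 := by
      refine Relation.ReflTransGen.mono ?_ _ _ (hpath f hr hp hlt)
      intro a b hab
      exact ⟨(hsub f hr hp hlt hab).1, fun hmem => hcon (a, b) hab hmem⟩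
    exact hF₀acyc f.1 (Relation.TransGen.head' ⟨hr, by simpa using hfF₀⟩ hpath')
  let φ : Fin n × Fin n → Fin n × Fin n := fun f => if h : f ∈ S then (hex f h).choose else f
  have hφC : ∀ f ∈ S, φ f ∈ C f ∧ φ f ∈ F₀ := by
    intro f hf
    simp only [φ, dif_pos hf]
    exact (hex f hf).choose_spec
  have hSB : ∀ f ∈ S, r f.1 f.2 ∧ part f.1 ≠ part f.2 ∧ f.2 < f.1 := by
    intro f hf
    exact (hBmem f).mp (Finset.mem_sdiff.mp hf).1
  have hinj : Set.InjOn φ ↑S := by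
    intro f hf g hg hfg
    by_contra hne'
    have hf' := Finset.mem_coe.mp hf
    have hg' := Finset.mem_coe.mp hg
    obtain ⟨hr1, hp1, hl1⟩ := hSB f hf'
    obtain ⟨hr2, hp2, hl2⟩ := hSB g hg'
    have hd := hdisj f g hr1 hp1 hl1 hr2 hp2 hl2 hne'
    exact (Set.disjoint_left.mp hd (hφC f hf').1) (hfg ▸ (hφC g hg').1)
  have himgF₀ : S.image φ ⊆ F₀ := by
    intro e he
    obtain ⟨f, hf, rfl⟩ := Finset.mem_image.mp he
    exact (hφC f hf).2
  have himgB : ∀ e ∈ S.image φ, e ∉ B := by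
    intro e he heB
    obtain ⟨f, hf, rfl⟩ := Finset.mem_image.mp he
    obtain ⟨hr1, hp1, hl1⟩ := hSB f hf
    have h1 := hsub f hr1 hp1 hl1 (hφC f hf).1
    obtain ⟨_, _, hlt, _⟩ := h1
    obtain ⟨_, _, hlt'⟩ := (hBmem _).mp heB
    exact absurd hlt (asymm hlt')
  set F : Finset (Fin n × Fin n) := B ∪ (F₀ \ S.image φ) with hFdef
  have hFeq : F = S ∪ (F₀ \ S.image φ) := by
    ext e
    have h1 : e ∈ B → e ∉ S.image φ := fun h h' => himgB e h' h
    simp only [hFdef, hSdef, Finset.mem_union, Finset.mem_sdiff]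
    tauto
  -- cardinality
  have hcardimg : (S.image φ).card = S.card := Finset.card_image_of_injOn hinj
  have hSle : S.card ≤ F₀.card := hcardimg ▸ Finset.card_le_card himgF₀
  have hdisjSF : Disjoint S (F₀ \ S.image φ) := by
    rw [Finset.disjoint_left]
    intro e he he'
    exact (Finset.mem_sdiff.mp he).2 (Finset.mem_sdiff.mp he').1
  have hcardF : F.card = F₀.card := by
    rw [hFeq, Finset.card_union_of_disjoint hdisjSF, Finset.card_sdiff_of_subset himgF₀, hcardimg,
      Nat.add_sub_cancel' hSle]
  -- acyclicity
  have hBF : B ⊆ F := hFdef ▸ Finset.subset_union_left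
  have hstep_le : ∀ a b : Fin n, (r a b ∧ (a, b) ∉ F) → part a ≤ part b := by
    intro a b ⟨hr, hnF⟩
    rcases le_or_gt a b with h | h
    · exact hmono h
    · by_cases hp : part a = part b
      · exact hp.le
      · exact absurd (hBF ((hBmem (a, b)).mpr ⟨hr, hp, h⟩)) hnF
  have hle : ∀ a b : Fin n, Relation.TransGen (fun a b => r a b ∧ (a, b) ∉ F) a b →
      part a ≤ part b := by
    intro a b h
    induction h with
    | single h => exact hstep_le _ _ h
    | tail _ h ih => exact ih.trans (hstep_le _ _ h)
  have hstep_eq : ∀ a b : Fin n, (r a b ∧ (a, b) ∉ F) → part a = part b →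
      r a b ∧ (a, b) ∉ F₀ := by
    intro a b ⟨hr, hnF⟩ hp
    refine ⟨hr, fun hmem => ?_⟩
    have hnB : (a, b) ∉ B := fun h => ((hBmem (a, b)).mp h).2.1 hp
    have : (a, b) ∈ S.image φ := by
      by_contra hni
      exact hnF (hFdef ▸ Finset.mem_union_right _ (Finset.mem_sdiff.mpr ⟨hmem, hni⟩))
    obtain ⟨f, hf, hfe⟩ := Finset.mem_image.mp this
    obtain ⟨hr1, hp1, hl1⟩ := hSB f hf
    have h1 := hsub f hr1 hp1 hl1 (hφC f hf).1
    rw [hfe] at h1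
    exact h1.2.1 hp
  refine ⟨F, hcardF.trans hF₀card, ?_, ?_⟩
  · intro v hv
    have key : ∀ a : Fin n, Relation.TransGen (fun a b => r a b ∧ (a, b) ∉ F) a v →
        part a = part v → Relation.TransGen (fun a b => r a b ∧ (a, b) ∉ F₀) a v := by
      intro a h
      induction h using Relation.TransGen.head_induction_on with
      | single h => exact fun he => Relation.TransGen.single (hstep_eq _ _ h he)
      | head h h' ihh =>
        intro he
        have h1 := hstep_le _ _ h
        have h2 := hle _ _ h'
        have heq1 : part _ = part v := le_antisymm h2 (he ▸ h1)
        have heq2 : part _ = part _ := le_antisymm h1 (h2.trans he.symm.le)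
        exact Relation.TransGen.head (hstep_eq _ _ h heq2) (ihh heq1)
    exact hF₀acyc v (key v hv rfl)
  · intro f hr hp hlt
    exact hBF ((hBmem f).mpr ⟨hr, hp, hlt⟩)
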